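/- arXiv:2605.14184 — 2 statements merged into one kernel-verified Lean document; each statement's English description precedes it below -/
import Mathlib

section
/- Let Y be a random variable with the Beta(p, p) distribution, p > 0. Then E[(1 - 2Y)^{2n}] = B(n + 1/2, p) / B(1/2, p) for all natural numbers n ≥ 1. -/
open MeasureTheory ProbabilityTheory Real Set

noncomputable def B (a b : ℝ) : ℝ := Real.Gamma a * Real.Gamma b / Real.Gamma (a + b)

/-- The Beta(p, p) measure on ℝ, given by its density on (0, 1). -/
noncomputable def betaMeasurePP (p : ℝ) : Measure ℝ :=
  volume.withDensity fun y =>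
    ENNReal.ofReal (Set.indicator (Set.Ioo (0 : ℝ) 1)
      (fun y => y ^ (p - 1) * (1 - y) ^ (p - 1) / B p p) y)

lemma B_pos {a b : ℝ} (ha : 0 < a) (hb : 0 < b) : 0 < B a b :=
  div_pos (mul_pos (Real.Gamma_pos_of_pos ha) (Real.Gamma_pos_of_pos hb))
    (Real.Gamma_pos_of_pos (by linarith))

lemma Jint (p : ℝ)
    (hint : IntegrableOn (fun y : ℝ => y ^ (p-1) * (1-y) ^ (p-1)) (Ioo (0:ℝ) 1)) (k : ℕ) :
    IntegrableOn (fun y : ℝ => (1-2*y)^k * (y ^ (p-1) * (1-y) ^ (p-1))) (Ioo (0:ℝ) 1) := by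
  refine hint.mono' ?_ ?_
  · apply AEStronglyMeasurable.mul
    · exact (continuous_pow k |>.comp (by continuity)).aestronglyMeasurable
    · exact hint.aestronglyMeasurable
  · filter_upwards [ae_restrict_mem measurableSet_Ioo] with y hy
    have hg : 0 ≤ y ^ (p-1) * (1-y) ^ (p-1) :=
      mul_nonneg (Real.rpow_nonneg hy.1.le _) (Real.rpow_nonneg (by linarith [hy.2]) _)
    have ht : |1-2*y| ≤ 1 := by rw [abs_le]; constructor <;> nlinarith [hy.1, hy.2]
    rw [norm_mul, norm_pow, Real.norm_eq_abs, Real.norm_eq_abs, abs_of_nonneg hg]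
    calc |1-2*y|^k * (y ^ (p-1) * (1-y) ^ (p-1)) ≤ 1^k * (y ^ (p-1) * (1-y) ^ (p-1)) := by
          gcongr
      _ = y ^ (p-1) * (1-y) ^ (p-1) := by ring

lemma J_rec (p : ℝ) (hp : 0 < p)
    (hint : IntegrableOn (fun y : ℝ => y ^ (p-1) * (1-y) ^ (p-1)) (Ioo (0:ℝ) 1))
    (hJ : ∀ k : ℕ, IntegrableOn (fun y : ℝ => (1-2*y)^k * (y ^ (p-1) * (1-y) ^ (p-1))) (Ioo (0:ℝ) 1))
    (m : ℕ) :
    ((2*m+1)/2 + p) * ∫ y in Ioo (0:ℝ) 1, (1-2*y)^(2*m+2) * (y ^ (p-1) * (1-y) ^ (p-1))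
      = ((2*m+1)/2) * ∫ y in Ioo (0:ℝ) 1, (1-2*y)^(2*m) * (y ^ (p-1) * (1-y) ^ (p-1)) := by
  set g : ℝ → ℝ := fun y => y ^ (p-1) * (1-y) ^ (p-1) with hg
  set c1 : ℝ := (2*m+1)/2 with hc1
  set c2 : ℝ := (2*m+1)/2 + p with hc2
  set F : ℝ → ℝ := fun y => (1-2*y)^(2*m+1) * (y^p * (1-y)^p) with hF
  set φ : ℝ → ℝ := fun y => (-c1) * (1-2*y)^(2*m) + c2 * (1-2*y)^(2*m+2) with hφ
  have hderiv : ∀ y ∈ Ioo (0:ℝ) 1, HasDerivAt F (g y * φ y) y := by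
    intro y hy
    have hy0 : (0:ℝ) < y := hy.1
    have hy1 : y < 1 := hy.2
    have h1 : HasDerivAt (fun y : ℝ => (1-2*y)^(2*m+1))
        ((2*m+1 : ℕ) * (1-2*y)^(2*m) * (-2)) y := by
      have hin : HasDerivAt (fun y : ℝ => 1-2*y) (-2) y := by
        simpa using ((hasDerivAt_id y).const_mul 2).const_sub 1
      simpa [Function.comp_def] using (hasDerivAt_pow (2*m+1) (1-2*y)).comp y hin
    have h2 : HasDerivAt (fun y : ℝ => y^p) (p * y^(p-1)) y := by
      simpa [mul_comm] using Real.hasDerivAt_rpow_const (p := p) (Or.inl hy0.ne')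
    have h3 : HasDerivAt (fun y : ℝ => (1-y)^p) (p * (1-y)^(p-1) * (-1)) y := by
      have hin : HasDerivAt (fun y : ℝ => 1-y) (-1) y := by
        simpa using (hasDerivAt_id y).const_sub 1
      exact (Real.hasDerivAt_rpow_const (p := p) (x := 1-y) (Or.inl (by linarith))).comp y hin
        |>.congr_deriv (by ring)
    have := h1.mul (h2.mul h3)
    refine this.congr_deriv ?_
    have e1 : y^p = y^(p-1) * y := by
      rw [← Real.rpow_add_one hy0.ne' (p-1)]; ring_nf
    have e2 : (1-y)^p = (1-y)^(p-1) * (1-y) := by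
      rw [← Real.rpow_add_one (by linarith : (1:ℝ)-y ≠ 0) (p-1)]; ring_nf
    simp only [Pi.mul_apply]
    rw [hφ, hg, e1, e2]
    push_cast
    ring
  have hcont : ∀ x : ℝ, ContinuousAt F x := by
    intro x
    apply ContinuousAt.mul
    · exact (continuous_pow _).continuousAt.comp (by fun_prop)
    · apply ContinuousAt.mul
      · exact continuousAt_id.rpow_const (Or.inr hp.le)
      · exact ((continuous_const.sub continuous_id).continuousAt).rpow_const (Or.inr hp.le)
  have ha : Filter.Tendsto F (nhdsWithin 0 (Ioi 0)) (nhds 0) := by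
    have hF0 : F 0 = 0 := by simp [hF, Real.zero_rpow hp.ne']
    have h' : Filter.Tendsto F (nhdsWithin 0 (Ioi 0)) (nhds (F 0)) :=
      (hcont 0).tendsto.mono_left nhdsWithin_le_nhds
    rwa [hF0] at h'
  have hb : Filter.Tendsto F (nhdsWithin 1 (Iio 1)) (nhds 0) := by
    have hF1 : F 1 = 0 := by simp [hF, Real.zero_rpow hp.ne']
    have h' : Filter.Tendsto F (nhdsWithin 1 (Iio 1)) (nhds (F 1)) :=
      (hcont 1).tendsto.mono_left nhdsWithin_le_nhds
    rwa [hF1] at h'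
  have hφbd : ∀ y ∈ Ioo (0:ℝ) 1, |φ y| ≤ c1 + c2 := by
    intro y hy
    have ht : |1-2*y| ≤ 1 := by rw [abs_le]; constructor <;> nlinarith [hy.1, hy.2]
    have h1 : |(1-2*y)^(2*m)| ≤ 1 := by
      rw [abs_pow]; exact pow_le_one₀ (abs_nonneg _) ht
    have h2 : |(1-2*y)^(2*m+2)| ≤ 1 := by
      rw [abs_pow]; exact pow_le_one₀ (abs_nonneg _) ht
    have hc1p : (0:ℝ) ≤ c1 := by positivity
    have hc2p : (0:ℝ) ≤ c2 := by positivity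
    calc |φ y| ≤ |(-c1) * (1-2*y)^(2*m)| + |c2 * (1-2*y)^(2*m+2)| := abs_add_le _ _
      _ = c1 * |(1-2*y)^(2*m)| + c2 * |(1-2*y)^(2*m+2)| := by
          rw [abs_mul, abs_mul, abs_neg, abs_of_nonneg hc1p, abs_of_nonneg hc2p]
      _ ≤ c1 * 1 + c2 * 1 := by gcongr
      _ = c1 + c2 := by ring
  have hφm : Continuous φ := by fun_prop
  have hFint : IntervalIntegrable (fun y => g y * φ y) volume 0 1 := by
    rw [intervalIntegrable_iff_integrableOn_Ioo_of_le (by norm_num)]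
    refine ((hint.const_mul (c1 + c2)).mono' ?_ ?_)
    · exact hint.aestronglyMeasurable.mul hφm.aestronglyMeasurable
    · filter_upwards [ae_restrict_mem measurableSet_Ioo] with y hy
      have hgnn : 0 ≤ g y :=
        mul_nonneg (Real.rpow_nonneg hy.1.le _) (Real.rpow_nonneg (by linarith [hy.2]) _)
      rw [norm_mul, Real.norm_eq_abs, Real.norm_eq_abs, abs_of_nonneg hgnn]
      calc g y * |φ y| ≤ g y * (c1 + c2) := by gcongr; exact hφbd y hy
        _ = (c1 + c2) * g y := by ring
  have key : ∫ y in (0:ℝ)..1, g y * φ y = 0 - 0 :=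
    intervalIntegral.integral_eq_sub_of_hasDerivAt_of_tendsto (by norm_num) hderiv hFint ha hb
  rw [intervalIntegral.integral_of_le (by norm_num : (0:ℝ) ≤ 1),
    MeasureTheory.integral_Ioc_eq_integral_Ioo] at key
  have hsplit : ∫ y in Ioo (0:ℝ) 1, g y * φ y
      = (-c1) * (∫ y in Ioo (0:ℝ) 1, (1-2*y)^(2*m) * g y)
        + c2 * (∫ y in Ioo (0:ℝ) 1, (1-2*y)^(2*m+2) * g y) := by
    rw [← MeasureTheory.integral_const_mul, ← MeasureTheory.integral_const_mul,
      ← MeasureTheory.integral_add (((hJ (2*m)).const_mul _)) (((hJ (2*m+2)).const_mul _))]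
    apply MeasureTheory.setIntegral_congr_fun measurableSet_Ioo
    intro y _
    simp only [hφ]
    ring
  rw [hsplit] at key
  linarith [key]

lemma B_rec (p : ℝ) (hp : 0 < p) (x : ℝ) (hx : 0 < x) :
    B (x + 1) p * (x + p) = x * B x p := by
  have h1 : Real.Gamma (x + 1) = x * Real.Gamma x := Real.Gamma_add_one hx.ne'
  have h2 : Real.Gamma (x + 1 + p) = (x + p) * Real.Gamma (x + p) := by
    rw [show x + 1 + p = (x + p) + 1 by ring, Real.Gamma_add_one (by linarith)]
  have h3 : Real.Gamma (x + p) ≠ 0 := (Real.Gamma_pos_of_pos (by linarith)).ne'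
  unfold B
  rw [h1, h2]
  field_simp

lemma J_formula (p : ℝ) (hp : 0 < p)
    (hrec : ∀ m : ℕ,
      ((2*m+1)/2 + p) * ∫ y in Ioo (0:ℝ) 1, (1-2*y)^(2*m+2) * (y ^ (p-1) * (1-y) ^ (p-1))
        = ((2*m+1)/2) * ∫ y in Ioo (0:ℝ) 1, (1-2*y)^(2*m) * (y ^ (p-1) * (1-y) ^ (p-1)))
    (hbase : ∫ y in Ioo (0:ℝ) 1, y ^ (p-1) * (1-y) ^ (p-1) = B p p) :
    ∀ n : ℕ, ∫ y in Ioo (0:ℝ) 1, (1-2*y)^(2*n) * (y ^ (p-1) * (1-y) ^ (p-1))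
      = B ((n:ℝ) + 1/2) p / B (1/2) p * B p p := by
  intro n
  induction n with
  | zero =>
    simp only [Nat.cast_zero, mul_zero, pow_zero, one_mul, zero_add]
    rw [hbase, div_self (B_pos (by norm_num) hp).ne']
    ring
  | succ n ih =>
    have hrm := hrec n
    rw [ih] at hrm
    have hx : (0:ℝ) < (n:ℝ) + 1/2 := by positivity
    have hb := B_rec p hp ((n:ℝ) + 1/2) hx
    have hc2 : (0:ℝ) < (2*(n:ℝ)+1)/2 + p := by positivity
    have hd : (0:ℝ) < ((n:ℝ)+1/2) + p := by positivity
    have hB2 : B (1/2) p ≠ 0 := (B_pos (by norm_num) hp).ne'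
    have h1 : ∫ y in Ioo (0:ℝ) 1, (1-2*y)^(2*(n+1)) * (y ^ (p-1) * (1-y) ^ (p-1))
        = ((2*(n:ℝ)+1)/2) / ((2*(n:ℝ)+1)/2 + p)
          * (B ((n:ℝ) + 1/2) p / B (1/2) p * B p p) := by
      rw [show 2*(n+1) = 2*n+2 by ring, div_mul_eq_mul_div, div_mul_eq_mul_div,
        eq_div_iff hc2.ne', mul_comm]
      rw [div_mul_eq_mul_div] at hrm
      linarith [hrm]
    have h2 : B ((n:ℝ) + 1 + 1/2) p = ((n:ℝ)+1/2) / (((n:ℝ)+1/2) + p) * B ((n:ℝ)+1/2) p := by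
      rw [show (n:ℝ) + 1 + 1/2 = ((n:ℝ)+1/2) + 1 by ring, div_mul_eq_mul_div,
        eq_div_iff hd.ne']
      linarith [hb]
    push_cast
    rw [h1, h2]
    field_simp

lemma base_lemma {Ω : Type*} [MeasureSpace Ω] (μ : Measure Ω) [IsProbabilityMeasure μ]
    (p : ℝ) (hp : 0 < p) (Y : Ω → ℝ) (hm : Measurable Y)
    (hY : Measure.map Y μ = betaMeasurePP p) (n : ℕ) :
    (IntegrableOn (fun y : ℝ => y ^ (p-1) * (1-y) ^ (p-1)) (Ioo (0:ℝ) 1)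
      ∧ ∫ y in Ioo (0:ℝ) 1, y ^ (p-1) * (1-y) ^ (p-1) = B p p) := by
  have hB : 0 < B p p := B_pos hp hp
  have hgm : Measurable (fun y : ℝ => y ^ (p-1) * (1-y) ^ (p-1)) :=
    (measurable_id'.pow_const _).mul ((measurable_const.sub measurable_id').pow_const _)
  -- the measure of univ is 1
  have huniv : betaMeasurePP p univ = 1 := by
    rw [← hY, Measure.map_apply hm MeasurableSet.univ]
    simp
  have hL : ∫⁻ y in Ioo (0:ℝ) 1, ENNReal.ofReal (y ^ (p-1) * (1-y) ^ (p-1))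
      = ENNReal.ofReal (B p p) := by
    have h1 : betaMeasurePP p univ
        = ∫⁻ y, ENNReal.ofReal (Set.indicator (Set.Ioo (0:ℝ) 1)
            (fun y => y ^ (p-1) * (1-y) ^ (p-1) / B p p) y) := by
      rw [betaMeasurePP, withDensity_apply _ MeasurableSet.univ, Measure.restrict_univ]
    have h2 : ∀ y : ℝ, ENNReal.ofReal (Set.indicator (Set.Ioo (0:ℝ) 1)
          (fun y => y ^ (p-1) * (1-y) ^ (p-1) / B p p) y)
        = Set.indicator (Set.Ioo (0:ℝ) 1)
            (fun y => ENNReal.ofReal (y ^ (p-1) * (1-y) ^ (p-1)) / ENNReal.ofReal (B p p)) y := by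
      intro y
      by_cases hy : y ∈ Ioo (0:ℝ) 1
      · rw [Set.indicator_of_mem hy, Set.indicator_of_mem hy, ENNReal.ofReal_div_of_pos hB]
      · rw [Set.indicator_of_notMem hy, Set.indicator_of_notMem hy, ENNReal.ofReal_zero]
    rw [h1] at huniv
    simp_rw [h2] at huniv
    rw [lintegral_indicator measurableSet_Ioo] at huniv
    simp_rw [div_eq_mul_inv] at huniv
    rw [lintegral_mul_const _ (hgm.ennreal_ofReal)] at huniv
    have hc0 : ENNReal.ofReal (B p p) ≠ 0 := by positivity
    have hct : ENNReal.ofReal (B p p) ≠ ⊤ := ENNReal.ofReal_ne_top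
    calc ∫⁻ y in Ioo (0:ℝ) 1, ENNReal.ofReal (y ^ (p-1) * (1-y) ^ (p-1))
        = (∫⁻ y in Ioo (0:ℝ) 1, ENNReal.ofReal (y ^ (p-1) * (1-y) ^ (p-1)))
            * (ENNReal.ofReal (B p p))⁻¹ * ENNReal.ofReal (B p p) := by
          rw [mul_assoc, ENNReal.inv_mul_cancel hc0 hct, mul_one]
      _ = 1 * ENNReal.ofReal (B p p) := by rw [huniv]
      _ = ENNReal.ofReal (B p p) := one_mul _
  have hae : ∀ᵐ y ∂(volume.restrict (Ioo (0:ℝ) 1)), 0 ≤ y ^ (p-1) * (1-y) ^ (p-1) := by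
    filter_upwards [ae_restrict_mem measurableSet_Ioo] with y hy
    exact mul_nonneg (Real.rpow_nonneg hy.1.le _) (Real.rpow_nonneg (by linarith [hy.2]) _)
  have hint : IntegrableOn (fun y : ℝ => y ^ (p-1) * (1-y) ^ (p-1)) (Ioo (0:ℝ) 1) := by
    refine ⟨hgm.aestronglyMeasurable, ?_⟩
    rw [hasFiniteIntegral_iff_ofReal hae, hL]
    exact ENNReal.ofReal_lt_top
  refine ⟨hint, ?_⟩
  rw [integral_eq_lintegral_of_nonneg_ae hae hgm.aestronglyMeasurable, hL,
    ENNReal.toReal_ofReal hB.le]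

lemma glue_lemma {Ω : Type*} [MeasureSpace Ω] (μ : Measure Ω) [IsProbabilityMeasure μ]
    (p : ℝ) (hp : 0 < p) (Y : Ω → ℝ) (hm : Measurable Y)
    (hY : Measure.map Y μ = betaMeasurePP p) (n : ℕ)
    (hform : ∫ y in Ioo (0:ℝ) 1, (1-2*y)^(2*n) * (y ^ (p-1) * (1-y) ^ (p-1))
      = B ((n:ℝ) + 1/2) p / B (1/2) p * B p p) :
    ∫ ω, (1 - 2 * Y ω) ^ (2 * n) ∂μ = B (n + 1 / 2) p / B (1 / 2) p := by
  have hB : 0 < B p p := B_pos hp hp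
  set h : ℝ → ℝ := fun y => Set.indicator (Set.Ioo (0:ℝ) 1)
      (fun y => y ^ (p - 1) * (1 - y) ^ (p - 1) / B p p) y with hh
  have hhm : Measurable h := by
    apply Measurable.indicator _ measurableSet_Ioo
    exact ((measurable_id'.pow_const _).mul
      ((measurable_const.sub measurable_id').pow_const _)).div_const _
  have hhnn : ∀ y, 0 ≤ h y := by
    intro y
    apply Set.indicator_nonneg
    intro x hx
    exact div_nonneg (mul_nonneg (Real.rpow_nonneg hx.1.le _)
      (Real.rpow_nonneg (by linarith [hx.2]) _)) hB.le
  have hfm : AEStronglyMeasurable (fun y : ℝ => (1 - 2*y)^(2*n)) (betaMeasurePP p) :=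
    (Continuous.aestronglyMeasurable (by continuity))
  calc ∫ ω, (1 - 2 * Y ω) ^ (2 * n) ∂μ
      = ∫ y, (1 - 2*y)^(2*n) ∂(Measure.map Y μ) := (integral_map hm.aemeasurable (hY ▸ hfm)).symm
    _ = ∫ y, (1 - 2*y)^(2*n) ∂(betaMeasurePP p) := by rw [hY]
    _ = ∫ y, ((h y).toNNReal : ℝ) • (1 - 2*y)^(2*n) := by
        rw [betaMeasurePP]
        exact integral_withDensity_eq_integral_smul (hhm.real_toNNReal) _
    _ = ∫ y, h y * (1 - 2*y)^(2*n) := by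
        congr 1; funext y
        rw [smul_eq_mul, Real.coe_toNNReal _ (hhnn y)]
    _ = ∫ y, Set.indicator (Ioo (0:ℝ) 1)
          (fun y => (y ^ (p-1) * (1-y) ^ (p-1) / B p p) * (1 - 2*y)^(2*n)) y := by
        congr 1; funext y
        rw [hh]
        by_cases hy : y ∈ Ioo (0:ℝ) 1
        · simp only [Set.indicator_of_mem hy]
        · simp only [Set.indicator_of_notMem hy, zero_mul]
    _ = ∫ y in Ioo (0:ℝ) 1, (y ^ (p-1) * (1-y) ^ (p-1) / B p p) * (1 - 2*y)^(2*n) :=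
        integral_indicator measurableSet_Ioo
    _ = ∫ y in Ioo (0:ℝ) 1, ((1-2*y)^(2*n) * (y ^ (p-1) * (1-y) ^ (p-1))) / B p p := by
        congr 1; funext y; ring
    _ = (∫ y in Ioo (0:ℝ) 1, (1-2*y)^(2*n) * (y ^ (p-1) * (1-y) ^ (p-1))) / B p p :=
        integral_div _ _
    _ = B ((n:ℝ) + 1/2) p / B (1/2) p := by
        rw [hform, mul_div_assoc, div_self hB.ne', mul_one]

theorem stmt14 {Ω : Type*} [MeasureSpace Ω] (μ : Measure Ω) [IsProbabilityMeasure μ]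
    (p : ℝ) (hp : 0 < p) (Y : Ω → ℝ) (hm : Measurable Y)
    (hY : Measure.map Y μ = betaMeasurePP p)
    (n : ℕ) (hn : 1 ≤ n) :
    ∫ ω, (1 - 2 * Y ω) ^ (2 * n) ∂μ = B (n + 1 / 2) p / B (1 / 2) p := by
  obtain ⟨hint, hbase⟩ := base_lemma μ p hp Y hm hY n
  have hform := J_formula p hp (J_rec p hp hint (Jint p hint)) hbase n
  exact glue_lemma μ p hp Y hm hY n hform
end

section
/- For all natural numbers n, ∑_{k=0}^{∞} ((1/2)_k)² · Γ(n + 1/2) / (k! · Γ(n + k + 3/2)) = (π / 4^{2n}) · C(2n, n)². -/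
open Real Filter Topology

noncomputable def myt (n k : ℕ) : ℝ :=
  (Real.Gamma (1 / 2 + k) / Real.Gamma (1 / 2)) ^ 2 * Real.Gamma (n + 1 / 2)
        / ((Nat.factorial k : ℝ) * Real.Gamma (n + k + 3 / 2))

lemma myt_pos (n k : ℕ) : 0 < myt n k := by
  unfold myt
  have h1 : 0 < Real.Gamma (1/2 + k) := Real.Gamma_pos_of_pos (by positivity)
  have h2 : 0 < Real.Gamma (1/2 : ℝ) := Real.Gamma_pos_of_pos (by norm_num)
  have h3 : 0 < Real.Gamma (n + 1/2 : ℝ) := Real.Gamma_pos_of_pos (by positivity)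
  have h4 : 0 < Real.Gamma (n + k + 3/2 : ℝ) := Real.Gamma_pos_of_pos (by positivity)
  have h5 : (0:ℝ) < Nat.factorial k := by exact_mod_cast Nat.factorial_pos k
  positivity

lemma myt_succ_k (n k : ℕ) :
    myt n (k+1) = myt n k * ((k + 1/2)^2 / ((k+1) * (n + k + 3/2))) := by
  unfold myt
  have e1 : (1/2 + (k+1:ℕ) : ℝ) = (1/2 + k) + 1 := by push_cast; ring
  have e2 : (n + (k+1:ℕ) + 3/2 : ℝ) = (n + k + 3/2) + 1 := by push_cast; ring
  rw [e1, e2, Real.Gamma_add_one (by positivity), Real.Gamma_add_one (by positivity),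
    Nat.factorial_succ]
  have h1 : Real.Gamma (1/2 + k) ≠ 0 := (Real.Gamma_pos_of_pos (by positivity)).ne'
  have h2 : Real.Gamma (1/2 : ℝ) ≠ 0 := (Real.Gamma_pos_of_pos (by norm_num)).ne'
  have h4 : Real.Gamma (n + k + 3/2 : ℝ) ≠ 0 := (Real.Gamma_pos_of_pos (by positivity)).ne'
  have h5 : (Nat.factorial k : ℝ) ≠ 0 := by exact_mod_cast (Nat.factorial_pos k).ne'
  have h6 : ((k:ℝ) + 1) ≠ 0 := by positivity
  have h7 : ((n:ℝ) + k + 3/2) ≠ 0 := by positivity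
  push_cast
  field_simp
  ring

lemma myt_succ_n (n k : ℕ) :
    myt (n+1) k = myt n k * ((n + 1/2) / (n + k + 3/2)) := by
  unfold myt
  have e1 : ((n+1:ℕ) + 1/2 : ℝ) = (n + 1/2) + 1 := by push_cast; ring
  have e2 : ((n+1:ℕ) + k + 3/2 : ℝ) = (n + k + 3/2) + 1 := by push_cast; ring
  rw [e1, e2, Real.Gamma_add_one (by positivity), Real.Gamma_add_one (by positivity)]
  have h4 : Real.Gamma (n + k + 3/2 : ℝ) ≠ 0 := (Real.Gamma_pos_of_pos (by positivity)).ne'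
  have h3 : Real.Gamma (n + 1/2 : ℝ) ≠ 0 := (Real.Gamma_pos_of_pos (by positivity)).ne'
  have h5 : (Nat.factorial k : ℝ) ≠ 0 := by exact_mod_cast (Nat.factorial_pos k).ne'
  have h7 : ((n:ℝ) + k + 3/2) ≠ 0 := by positivity
  push_cast
  field_simp

noncomputable def cc : ℕ → ℝ
  | 0 => 1
  | (k+1) => cc k * (2*k+1) / (2*k+2)

lemma cc_pos (k : ℕ) : 0 < cc k := by
  induction k with
  | zero => norm_num [cc]
  | succ k ih => rw [cc]; positivity

lemma cc_sq_le (k : ℕ) : cc k ^ 2 * (2*k+1) ≤ 1 := by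
  induction k with
  | zero => norm_num [cc]
  | succ k ih =>
    rw [cc]
    have h : (cc k * (2*k+1) / (2*k+2)) ^ 2 * (2*(k+1:ℕ)+1)
        = cc k ^ 2 * (2*k+1) * ((2*k+1)*(2*k+3) / (2*k+2)^2) := by
      push_cast; field_simp; ring
    rw [h]
    have h2 : ((2*(k:ℝ)+1)*(2*k+3) / (2*k+2)^2) ≤ 1 := by
      rw [div_le_one (by positivity)]; nlinarith
    calc cc k ^ 2 * (2*k+1) * ((2*(k:ℝ)+1)*(2*k+3) / (2*k+2)^2)
        ≤ 1 * 1 := by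
          apply mul_le_mul ih h2 (by positivity) (by norm_num)
      _ = 1 := by norm_num

lemma cc_le (k : ℕ) : cc k ≤ 1 / Real.sqrt (2*k+1) := by
  have h := cc_sq_le k
  have hp : (0:ℝ) < 2*k+1 := by positivity
  rw [le_div_iff₀ (Real.sqrt_pos.mpr hp)]
  nlinarith [cc_pos k, Real.sq_sqrt hp.le, Real.sqrt_pos.mpr hp,
    sq_nonneg (cc k * Real.sqrt (2*k+1) - 1)]

lemma two_k_tendsto : Tendsto (fun k : ℕ => (2*(k:ℝ)+1)) atTop atTop := by
  apply tendsto_atTop_add_const_right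
  exact tendsto_natCast_atTop_atTop.const_mul_atTop (by norm_num)

-- cc tends to 0
lemma cc_tendsto_zero : Tendsto cc atTop (𝓝 0) := by
  have h0 : Tendsto (fun k : ℕ => ((2*(k:ℝ)+1))⁻¹) atTop (𝓝 0) :=
    two_k_tendsto.inv_tendsto_atTop
  have h : Tendsto (fun k : ℕ => (Real.sqrt (2*(k:ℝ)+1))⁻¹) atTop (𝓝 0) := by
    have := (Real.continuous_sqrt.tendsto 0).comp h0
    simpa [Function.comp_def, Real.sqrt_inv] using this
  apply squeeze_zero (fun k => (cc_pos k).le) (fun k => ?_) h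
  simpa [one_div] using cc_le k

lemma summable_aux : Summable (fun k : ℕ => ((((k:ℝ)+1)) ^ ((3:ℝ)/2))⁻¹) := by
  have h : Summable (fun n : ℕ => (((n:ℝ)) ^ ((3:ℝ)/2))⁻¹) :=
    Real.summable_nat_rpow_inv.mpr (by norm_num)
  have h2 := (summable_nat_add_iff 1).mpr h
  apply h2.congr
  intro k; push_cast; ring_nf

-- bound summable
lemma summable_bound : Summable (fun k : ℕ => cc k / (2*k+1)) := by
  apply Summable.of_nonneg_of_le (fun k => div_nonneg (cc_pos k).le (by positivity)) (fun k => ?_) summable_aux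
  have h1 : cc k ≤ 1/Real.sqrt (2*k+1) := cc_le k
  have h2 : (((k:ℝ)+1)) ^ ((3:ℝ)/2) = ((k:ℝ)+1) * Real.sqrt ((k:ℝ)+1) := by
    rw [Real.sqrt_eq_rpow, ← Real.rpow_one_add' (by positivity) (by norm_num)]
    norm_num
  rw [h2, ← one_div, div_le_div_iff₀ (by positivity) (by positivity)]
  have h3 : Real.sqrt ((k:ℝ)+1) ≤ Real.sqrt (2*k+1) := Real.sqrt_le_sqrt (by
    have : (0:ℝ) ≤ (k:ℝ) := Nat.cast_nonneg k
    linarith)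
  have hsp : (0:ℝ) < Real.sqrt (2*k+1) := Real.sqrt_pos.mpr (by positivity)
  have h4 : (1/Real.sqrt (2*(k:ℝ)+1)) * (((k:ℝ)+1)*Real.sqrt (2*(k:ℝ)+1)) = (k:ℝ)+1 := by
    field_simp
  calc cc k * (((k:ℝ)+1) * Real.sqrt ((k:ℝ)+1))
      ≤ (1/Real.sqrt (2*(k:ℝ)+1)) * (((k:ℝ)+1)*Real.sqrt (2*(k:ℝ)+1)) := by
        apply mul_le_mul h1 (by gcongr) (by positivity) (by positivity)
    _ = (k:ℝ)+1 := h4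
    _ ≤ 1 * (2*(k:ℝ)+1) := by
        have : (0:ℝ) ≤ (k:ℝ) := Nat.cast_nonneg k
        linarith

-- cc in terms of central binomial
lemma cc_eq_choose (n : ℕ) : cc n = (Nat.choose (2*n) n : ℝ) / 4 ^ n := by
  induction n with
  | zero => norm_num [cc]
  | succ n ih =>
    rw [cc, ih]
    have key : ((n:ℝ)+1) * (Nat.choose (2*(n+1)) (n+1) : ℝ)
        = 2 * (2*n+1) * (Nat.choose (2*n) n : ℝ) := by
      have := Nat.succ_mul_centralBinom_succ n
      have h2 : Nat.centralBinom n = Nat.choose (2*n) n := rfl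
      have h3 : Nat.centralBinom (n+1) = Nat.choose (2*(n+1)) (n+1) := rfl
      exact_mod_cast this
    have hn1 : ((n:ℝ)+1) ≠ 0 := by positivity
    field_simp
    linear_combination (-(2:ℝ) * 4^n) * key

-- Wallis
lemma cc_wallis (k : ℕ) : Real.Wallis.W k = (cc k ^ 2 * (2*k+1))⁻¹ := by
  induction k with
  | zero => norm_num [Real.Wallis.W, cc]
  | succ k ih =>
    rw [Real.Wallis.W_succ, ih, cc]
    have h1 := cc_pos k
    push_cast
    field_simp
    ring

lemma cc_sq_tendsto : Tendsto (fun k : ℕ => cc k ^ 2 * (2*k+1)) atTop (𝓝 (2/π)) := by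
  have h := Real.Wallis.tendsto_W_nhds_pi_div_two
  have h2 : Tendsto (fun k : ℕ => (Real.Wallis.W k)⁻¹) atTop (𝓝 ((π/2)⁻¹)) :=
    h.inv₀ (by positivity)
  have h3 : ∀ k, (Real.Wallis.W k)⁻¹ = cc k ^ 2 * (2*k+1) := by
    intro k; rw [cc_wallis, inv_inv]
  simp only [h3] at h2
  have : ((π/2):ℝ)⁻¹ = 2/π := by rw [inv_div]
  rwa [this] at h2

lemma myt_zero_k (k : ℕ) : myt 0 k = cc k / (k + 1/2) := by
  induction k with
  | zero =>
    unfold myt cc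
    have e2 : ((0:ℕ):ℝ) + (0:ℕ) + 3/2 = (1/2 : ℝ) + 1 := by norm_num
    rw [e2, Real.Gamma_add_one (by norm_num)]
    have h2 : Real.Gamma (1/2 : ℝ) ≠ 0 := (Real.Gamma_pos_of_pos (by norm_num)).ne'
    push_cast
    field_simp
    norm_num
    ring
  | succ k ih =>
    rw [myt_succ_k, ih, cc]
    have h1 : ((k:ℝ) + 1/2) ≠ 0 := by positivity
    have h2 : ((k:ℝ) + 1) ≠ 0 := by positivity
    have h3 : ((0:ℕ):ℝ) + (k:ℝ) + 3/2 ≠ 0 := by positivity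
    push_cast
    field_simp
    ring

lemma myt_le_zero (n k : ℕ) : myt n k ≤ myt 0 k := by
  induction n with
  | zero => exact le_refl _
  | succ n ih =>
    rw [myt_succ_n]
    calc myt n k * ((n + 1/2) / (n + k + 3/2)) ≤ myt n k * 1 := by
          apply mul_le_mul_of_nonneg_left _ (myt_pos n k).le
          rw [div_le_one (by positivity)]
          have : (0:ℝ) ≤ (k:ℝ) := Nat.cast_nonneg k
          linarith
      _ = myt n k := mul_one _
      _ ≤ myt 0 k := ih

lemma summable_myt_zero : Summable (myt 0) := by
  have := summable_bound.mul_left 2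
  apply this.congr
  intro k
  rw [myt_zero_k]
  field_simp

lemma summable_myt (n : ℕ) : Summable (myt n) :=
  Summable.of_nonneg_of_le (fun k => (myt_pos n k).le) (fun k => myt_le_zero n k) summable_myt_zero

lemma myt_teles (n k : ℕ) :
    myt n k - (((n:ℝ)+1)^2/((n:ℝ)+1/2)^2) * myt (n+1) k
      = ((k:ℝ) * myt n k)/((n:ℝ)+1/2) - (((k:ℝ)+1) * myt n (k+1))/((n:ℝ)+1/2) := by
  rw [myt_succ_n, myt_succ_k]
  have h1 : ((n:ℝ) + 1/2) ≠ 0 := by positivity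
  have h2 : ((n:ℝ) + (k:ℝ) + 3/2) ≠ 0 := by positivity
  have h3 : ((k:ℝ) + 1) ≠ 0 := by positivity
  field_simp
  ring

lemma T_rec (n : ℕ) : ∑' k, myt (n+1) k = ((n:ℝ)+1/2)^2/((n:ℝ)+1)^2 * ∑' k, myt n k := by
  set ρ : ℝ := ((n:ℝ)+1)^2/((n:ℝ)+1/2)^2 with hρ
  have hρpos : 0 < ρ := by positivity
  have hsum : Summable (fun k => myt n k - ρ * myt (n+1) k) :=
    (summable_myt n).sub ((summable_myt (n+1)).mul_left ρ)
  have hg : Tendsto (fun N : ℕ => ((N:ℝ) * myt n N)/((n:ℝ)+1/2)) atTop (𝓝 0) := by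
    have hub : ∀ N : ℕ, ((N:ℝ) * myt n N)/((n:ℝ)+1/2) ≤ cc N * (1/((n:ℝ)+1/2)) := by
      intro N
      rw [div_le_iff₀ (by positivity)]
      have h1 : (N:ℝ) * myt n N ≤ (N:ℝ) * myt 0 N :=
        mul_le_mul_of_nonneg_left (myt_le_zero n N) (Nat.cast_nonneg N)
      have h2 : (N:ℝ) * myt 0 N ≤ cc N := by
        rw [myt_zero_k, ← mul_div_assoc, div_le_iff₀ (by positivity)]
        nlinarith [cc_pos N, Nat.cast_nonneg (α := ℝ) N]
      calc (N:ℝ) * myt n N ≤ cc N := le_trans h1 h2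
        _ ≤ cc N * (1/((n:ℝ)+1/2)) * ((n:ℝ)+1/2) := by
            rw [mul_assoc, one_div, inv_mul_cancel₀ (by positivity : ((n:ℝ)+1/2) ≠ 0), mul_one]
    have hlim : Tendsto (fun N : ℕ => cc N * (1/((n:ℝ)+1/2))) atTop (𝓝 0) := by
      simpa using cc_tendsto_zero.mul_const (1/((n:ℝ)+1/2))
    exact squeeze_zero
      (fun N => div_nonneg (mul_nonneg (Nat.cast_nonneg N) (myt_pos n N).le) (by positivity))
      hub hlim
  have hhs : HasSum (fun k => myt n k - ρ * myt (n+1) k) 0 := by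
    rw [hsum.hasSum_iff_tendsto_nat]
    have heq : ∀ N : ℕ, ∑ k ∈ Finset.range N, (myt n k - ρ * myt (n+1) k)
        = -(((N:ℝ) * myt n N)/((n:ℝ)+1/2)) := by
      intro N
      have hsr : ∑ k ∈ Finset.range N, (myt n k - ρ * myt (n+1) k)
          = ∑ k ∈ Finset.range N, ((fun k : ℕ => ((k:ℝ) * myt n k)/((n:ℝ)+1/2)) k
              - (fun k : ℕ => ((k:ℝ) * myt n k)/((n:ℝ)+1/2)) (k+1)) := by
        apply Finset.sum_congr rfl
        intro k _
        have h := myt_teles n k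
        rw [hρ]
        simp only []
        push_cast
        linarith [h]
      rw [hsr, Finset.sum_range_sub']
      simp
    simp only [heq]
    simpa using hg.neg
  have h0 : (∑' k, myt n k) - ρ * ∑' k, myt (n+1) k = 0 := by
    rw [← tsum_mul_left, ← Summable.tsum_sub (summable_myt n) ((summable_myt (n+1)).mul_left ρ)]
    exact hhs.tsum_eq
  have : (∑' k, myt n k) = ρ * ∑' k, myt (n+1) k := by linarith
  rw [this, hρ]
  have h1 : ((n:ℝ) + 1/2) ≠ 0 := by positivity
  have h2 : ((n:ℝ) + 1) ≠ 0 := by positivity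
  field_simp

lemma T_eq (n : ℕ) : ∑' k, myt n k = cc n ^ 2 * ∑' k, myt 0 k := by
  induction n with
  | zero => norm_num [cc]
  | succ n ih =>
    rw [T_rec, ih, cc]
    have h1 : ((n:ℝ) + 1) ≠ 0 := by positivity
    push_cast
    field_simp

lemma myt_n_zero (n : ℕ) : ((n:ℝ)+1/2) * myt n 0 = 1 := by
  unfold myt
  have e2 : ((n:ℝ)) + ((0:ℕ):ℝ) + 3/2 = ((n:ℝ) + 1/2) + 1 := by push_cast; ring
  rw [e2, Real.Gamma_add_one (by positivity)]
  have h2 : Real.Gamma (1/2 : ℝ) ≠ 0 := (Real.Gamma_pos_of_pos (by norm_num)).ne'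
  have h3 : Real.Gamma ((n:ℝ)+1/2) ≠ 0 := (Real.Gamma_pos_of_pos (by positivity)).ne'
  have h5 : ((n:ℝ)+1/2) ≠ 0 := by positivity
  simp only [Nat.cast_zero, Nat.factorial_zero, Nat.cast_one]
  field_simp
  ring

lemma f_bound (n k : ℕ) : ((n:ℝ)+1/2) * myt n k ≤ cc k / (2*k+1) := by
  induction k with
  | zero => rw [myt_n_zero]; norm_num [cc]
  | succ k ih =>
    rw [myt_succ_k, ← mul_assoc]
    have hQ : ((k:ℝ) + 1/2)^2 / (((k:ℝ)+1) * ((n:ℝ) + (k:ℝ) + 3/2))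
        ≤ ((k:ℝ) + 1/2)^2 / (((k:ℝ)+1) * ((k:ℝ) + 3/2)) := by
      apply div_le_div_of_nonneg_left (by positivity) (by positivity)
      nlinarith [Nat.cast_nonneg (α := ℝ) n, Nat.cast_nonneg (α := ℝ) k]
    have heq : cc (k+1) / (2*(k+1:ℕ)+1)
        = (cc k / (2*k+1)) * (((k:ℝ) + 1/2)^2 / (((k:ℝ)+1) * ((k:ℝ) + 3/2))) := by
      rw [cc]
      have h1 : ((k:ℝ)+1) ≠ 0 := by positivity
      push_cast
      field_simp
      ring
    rw [heq]
    apply mul_le_mul ih hQ (by positivity)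
    exact div_nonneg (cc_pos k).le (by positivity)

lemma f_tendsto_zero (k : ℕ) :
    Tendsto (fun n : ℕ => ((n:ℝ)+1/2) * myt n (k+1)) atTop (𝓝 0) := by
  set C : ℝ := (cc k / (2*k+1)) * (((k:ℝ) + 1/2)^2 / ((k:ℝ)+1)) with hC
  have hub : ∀ n : ℕ, ((n:ℝ)+1/2) * myt n (k+1) ≤ C * (1/((n:ℝ)+1)) := by
    intro n
    rw [myt_succ_k, ← mul_assoc]
    have h1 : ((n:ℝ)+1/2) * myt n k ≤ cc k / (2*k+1) := f_bound n k
    have hQ : ((k:ℝ) + 1/2)^2 / (((k:ℝ)+1) * ((n:ℝ) + (k:ℝ) + 3/2))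
        ≤ ((k:ℝ) + 1/2)^2 / (((k:ℝ)+1) * ((n:ℝ)+1)) := by
      apply div_le_div_of_nonneg_left (by positivity) (by positivity)
      nlinarith [Nat.cast_nonneg (α := ℝ) n, Nat.cast_nonneg (α := ℝ) k]
    calc ((n:ℝ)+1/2) * myt n k * (((k:ℝ) + 1/2)^2 / (((k:ℝ)+1) * ((n:ℝ) + (k:ℝ) + 3/2)))
        ≤ (cc k / (2*k+1)) * (((k:ℝ) + 1/2)^2 / (((k:ℝ)+1) * ((n:ℝ)+1))) := by
          apply mul_le_mul h1 hQ (by positivity)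
          exact div_nonneg (cc_pos k).le (by positivity)
      _ = C * (1/((n:ℝ)+1)) := by
          rw [hC]
          have h2 : ((k:ℝ)+1) ≠ 0 := by positivity
          have h3 : ((n:ℝ)+1) ≠ 0 := by positivity
          have h4 : (2*(k:ℝ)+1) ≠ 0 := by positivity
          field_simp
          try (left; trivial)
  have hlim : Tendsto (fun n : ℕ => C * (1/((n:ℝ)+1))) atTop (𝓝 0) := by
    simpa using tendsto_one_div_add_atTop_nhds_zero_nat.const_mul C
  exact squeeze_zero
    (fun n => mul_nonneg (by positivity) (myt_pos n (k+1)).le) hub hlim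

lemma T_zero : ∑' k, myt 0 k = π := by
  set T0 : ℝ := ∑' k, myt 0 k with hT0
  have lim1 : Tendsto (fun n : ℕ => ∑' k, (((n:ℝ)+1/2) * myt n k)) atTop
      (𝓝 (∑' k : ℕ, if k = 0 then (1:ℝ) else 0)) := by
    apply tendsto_tsum_of_dominated_convergence summable_bound
    · intro k
      cases k with
      | zero =>
        simp only [myt_n_zero, if_pos]
        exact tendsto_const_nhds
      | succ k =>
        simpa using f_tendsto_zero k
    · apply Filter.Eventually.of_forall
      intro n k
      rw [Real.norm_eq_abs, abs_of_pos (mul_pos (by positivity) (myt_pos n k))]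
      exact f_bound n k
  have hsum_ite : (∑' k : ℕ, if k = 0 then (1:ℝ) else 0) = 1 := tsum_ite_eq 0 1
  rw [hsum_ite] at lim1
  have lim1' : Tendsto (fun n : ℕ => ((n:ℝ)+1/2) * (cc n ^2 * T0)) atTop (𝓝 1) := by
    apply lim1.congr
    intro n
    rw [tsum_mul_left, T_eq]
  have lim2 : Tendsto (fun n : ℕ => ((n:ℝ)+1/2) * (cc n ^2 * T0)) atTop
      (𝓝 ((2/π) * (T0/2))) := by
    apply (cc_sq_tendsto.mul_const (T0/2)).congr
    intro n; ring
  have huniq := tendsto_nhds_unique lim1' lim2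
  have hπ : (0:ℝ) < π := Real.pi_pos
  field_simp at huniq
  linarith

theorem stmt19 (n : ℕ) :
    ∑' k : ℕ, (Real.Gamma (1 / 2 + k) / Real.Gamma (1 / 2)) ^ 2 * Real.Gamma (n + 1 / 2)
        / ((Nat.factorial k : ℝ) * Real.Gamma (n + k + 3 / 2))
      = (π / 4 ^ (2 * n)) * (Nat.choose (2 * n) n : ℝ) ^ 2 := by
  have h : (∑' k : ℕ, (Real.Gamma (1 / 2 + k) / Real.Gamma (1 / 2)) ^ 2 * Real.Gamma (n + 1 / 2)
        / ((Nat.factorial k : ℝ) * Real.Gamma (n + k + 3 / 2))) = ∑' k, myt n k := rfl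
  rw [h, T_eq, T_zero, cc_eq_choose]
  have h4 : ((4:ℝ)^n) ≠ 0 := by positivity
  have hπ : (0:ℝ) < π := Real.pi_pos
  field_simp
  ring
end
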